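/- Let 0 < α ≤ 1 and let a2, a3 be complex numbers satisfying |a3 + (2(1-α)/(3α)) a2²| ≤ (α² - 4|a2|²)/(6α) and |a2| ≤ α/2. Then (1/2)|a3 - (1/2)a2²| - (1/2)|a2| ≤ α/12. -/

import Mathlib

theorem stmt_13 (α : ℝ) (hα : 0 < α) (hα1 : α ≤ 1) (a2 a3 : ℂ)
    (h1 : ‖a3 + ((2 * (1 - α) / (3 * α)) : ℂ) * a2 ^ 2‖
      ≤ (α ^ 2 - 4 * ‖a2‖ ^ 2) / (6 * α))
    (h2 : ‖a2‖ ≤ α / 2) :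
    (1 / 2) * ‖a3 - (1 / 2) * a2 ^ 2‖ - (1 / 2) * ‖a2‖
      ≤ α / 12 := by
  set b := ‖a2‖ with hb
  have hb0 : 0 ≤ b := norm_nonneg a2
  have hc0 : (0:ℝ) ≤ 2 * (1 - α) / (3 * α) + 1 / 2 := by
    have := div_nonneg (by linarith : (0:ℝ) ≤ 2 * (1 - α)) (by linarith : (0:ℝ) ≤ 3 * α)
    linarith
  have heq : a3 - (1 / 2) * a2 ^ 2
      = (a3 + ((2 * (1 - α) / (3 * α)) : ℂ) * a2 ^ 2)
        - (((2 * (1 - α) / (3 * α) + 1 / 2 : ℝ)) : ℂ) * a2 ^ 2 := by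
    push_cast
    ring
  have htri : ‖a3 - (1 / 2) * a2 ^ 2‖
      ≤ ‖a3 + ((2 * (1 - α) / (3 * α)) : ℂ) * a2 ^ 2‖
        + (2 * (1 - α) / (3 * α) + 1 / 2) * b ^ 2 := by
    rw [heq]
    calc ‖_‖ ≤ ‖a3 + ((2 * (1 - α) / (3 * α)) : ℂ) * a2 ^ 2‖
          + ‖(((2 * (1 - α) / (3 * α) + 1 / 2 : ℝ)) : ℂ) * a2 ^ 2‖ :=
        norm_sub_le _ _
      _ = _ := by
        rw [norm_mul, Complex.norm_real, norm_pow, Real.norm_eq_abs, abs_of_nonneg hc0]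
  have key : ‖a3 - (1 / 2) * a2 ^ 2‖ ≤ (α - b ^ 2) / 6 := by
    have h3 : (α ^ 2 - 4 * b ^ 2) / (6 * α) + (2 * (1 - α) / (3 * α) + 1 / 2) * b ^ 2
        = (α - b ^ 2) / 6 := by
      field_simp
      ring
    nlinarith [htri, h1]
  nlinarith [key, hb0]
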